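/- arXiv:1105.5291 — 2 statements merged into one kernel-verified Lean document; each statement's English description precedes it below -/
import Mathlib

section
/- Let η be a configuration and i ∈ Λ⁻⁻ a site such that at least three of the four junction sites of the tile t(i) are occupied by particles of type 1. Then the configuration η′ obtained from η by turning t(i) into a tb-tile (i.e., η′ agrees with η outside t(i), η′(i) = 2, and η′ = 1 on the four junction sites) satisfies H(η′) ≤ H(η). -/
/- Common framework: two-type Kawasaki dynamics on a finite box in ℤ². -/

abbrev Site := ℤ × ℤ
abbrev Cell := ℤ × ℤ

/-- Nearest-neighbour adjacency on ℤ². -/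
def adjacent (x y : Site) : Prop := |x.1 - y.1| + |x.2 - y.2| = 1

instance (x y : Site) : Decidable (adjacent x y) :=
  inferInstanceAs (Decidable (|x.1 - y.1| + |x.2 - y.2| = 1))

/-- The four nearest neighbours of a site. -/
def nbrs (x : Site) : Finset Site :=
  {(x.1 + 1, x.2), (x.1 - 1, x.2), (x.1, x.2 + 1), (x.1, x.2 - 1)}

/-- Internal boundary ∂⁻Λ of a finite set Λ ⊂ ℤ². -/
def intBdry (Λ : Finset Site) : Finset Site := Λ.filter (fun x => ¬ nbrs x ⊆ Λ)

/-- Λ⁻ = Λ ∖ ∂⁻Λ. -/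
def inner1 (Λ : Finset Site) : Finset Site := Λ \ intBdry Λ

/-- Λ⁻⁻ = Λ⁻ ∖ ∂⁻Λ⁻. -/
def inner2 (Λ : Finset Site) : Finset Site := inner1 Λ \ intBdry (inner1 Λ)

/-- A configuration on Λ: each site of Λ carries 0 (empty), 1 (type 1) or 2 (type 2);
sites outside Λ are empty. -/
structure Config (Λ : Finset Site) where
  val : Site → Fin 3
  zero_outside : ∀ x, x ∉ Λ → val x = 0

/-- Number of particles of type 1. -/
def numType1 {Λ : Finset Site} (η : Config Λ) : ℕ := (Λ.filter (fun x => η.val x = 1)).card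

/-- Number of particles of type 2. -/
def numType2 {Λ : Finset Site} (η : Config Λ) : ℕ := (Λ.filter (fun x => η.val x = 2)).card

/-- Number of active bonds: unordered n.n. pairs of sites of Λ⁻, one carrying a 1 and the
other a 2 (each such unordered pair is counted once, as the ordered pair (type1,type2)). -/
def numBonds {Λ : Finset Site} (η : Config Λ) : ℕ :=
  ((inner1 Λ ×ˢ inner1 Λ).filter
    (fun p => adjacent p.1 p.2 ∧ η.val p.1 = 1 ∧ η.val p.2 = 2)).card

/-- The Hamiltonian H(η) = −U·B(η) + Δ1·n1(η) + Δ2·n2(η). -/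
noncomputable def energy (U Δ1 Δ2 : ℝ) {Λ : Finset Site} (η : Config Λ) : ℝ :=
  -U * numBonds η + Δ1 * numType1 η + Δ2 * numType2 η

/-- Allowed moves of the Kawasaki dynamics: hopping inside Λ, creation and annihilation
at the internal boundary. -/
def Communicates {Λ : Finset Site} (η η' : Config Λ) : Prop :=
  (∃ x ∈ Λ, ∃ y ∈ Λ, adjacent x y ∧ η.val x = 0 ∧ η.val y ≠ 0 ∧
      η'.val = Function.update (Function.update η.val x (η.val y)) y 0) ∨
  (∃ x ∈ intBdry Λ, ∃ v : Fin 3, v ≠ 0 ∧ η.val x = 0 ∧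
      η'.val = Function.update η.val x v) ∨
  (∃ x ∈ intBdry Λ, η.val x ≠ 0 ∧ η'.val = Function.update η.val x 0)

/-- ω is a path of allowed moves from η to η′. -/
def IsPath {Λ : Finset Site} (ω : List (Config Λ)) (η η' : Config Λ) : Prop :=
  ω.head? = some η ∧ ω.getLast? = some η' ∧ ω.Chain' Communicates

/-- Communication height between two sets of configurations:
Φ(A,B) = min over paths from A to B of the maximal energy along the path. -/
noncomputable def commHeightSet (U Δ1 Δ2 : ℝ) {Λ : Finset Site}
    (A B : Set (Config Λ)) : ℝ :=
  sInf {m : ℝ | ∃ η ∈ A, ∃ η' ∈ B, ∃ ω : List (Config Λ),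
    IsPath ω η η' ∧ ∀ ξ ∈ ω, energy U Δ1 Δ2 ξ ≤ m}

/-- Communication height Φ(η,η′). -/
noncomputable def commHeight (U Δ1 Δ2 : ℝ) {Λ : Finset Site} (η η' : Config Λ) : ℝ :=
  commHeightSet U Δ1 Δ2 {η} {η'}

/-- Stability level V_η = Φ(η, I_η) − H(η), where I_η = {ξ : H(ξ) < H(η)}. -/
noncomputable def stabLevel (U Δ1 Δ2 : ℝ) {Λ : Finset Site} (η : Config Λ) : ℝ :=
  commHeightSet U Δ1 Δ2 {η} {ξ : Config Λ | energy U Δ1 Δ2 ξ < energy U Δ1 Δ2 η}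
    - energy U Δ1 Δ2 η

/-- The set of stable configurations (global minimizers of H). -/
def Xstab (U Δ1 Δ2 : ℝ) (Λ : Finset Site) : Set (Config Λ) :=
  {η | ∀ ξ : Config Λ, energy U Δ1 Δ2 η ≤ energy U Δ1 Δ2 ξ}

/-- The set of metastable configurations (non-stable configurations of maximal
stability level). -/
def Xmeta (U Δ1 Δ2 : ℝ) (Λ : Finset Site) : Set (Config Λ) :=
  {η | η ∉ Xstab U Δ1 Δ2 Λ ∧
    ∀ ξ : Config Λ, ξ ∉ Xstab U Δ1 Δ2 Λ → stabLevel U Δ1 Δ2 ξ ≤ stabLevel U Δ1 Δ2 η}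

/-- The empty configuration □. -/
def emptyConfig (Λ : Finset Site) : Config Λ := ⟨fun _ => 0, fun _ _ => rfl⟩

/-- The critical length ℓ* = ⌈Δ1/(4U − Δ1 − Δ2)⌉. -/
noncomputable def lstar (U Δ1 Δ2 : ℝ) : ℤ := ⌈Δ1 / (4 * U - Δ1 - Δ2)⌉

/-- The box Λ: in dual coordinates u(x) = ((x1−x2)/2,(x1+x2)/2) the
(L+3/2)×(L+3/2) square centered at the origin, i.e. |x1−x2| ≤ L+1 and |x1+x2| ≤ L+1. -/
noncomputable def latBox (L : ℕ) : Finset Site :=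
  (Finset.Icc (-(L : ℤ) - 1) ((L : ℤ) + 1) ×ˢ Finset.Icc (-(L : ℤ) - 1) ((L : ℤ) + 1)).filter
    (fun x => |x.1 - x.2| ≤ (L : ℤ) + 1 ∧ |x.1 + x.2| ≤ (L : ℤ) + 1)

/-- The m×n dual rectangle of sites (in dual coordinates) with dual lower-left corner p
(in standard coordinates): sites p + i·(1,−1) + j·(1,1) for 0 ≤ i < m, 0 ≤ j < n.
All these sites have the same parity. -/
def dualRect (p : Site) (m n : ℕ) : Finset Site :=
  (Finset.range m ×ˢ Finset.range n).image
    (fun ij => ((p.1 + (ij.1 : ℤ) + (ij.2 : ℤ), p.2 + (ij.2 : ℤ) - (ij.1 : ℤ)) : Site))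

/-- The sites adjacent to a set S but not in S. -/
def siteBorder (S : Finset Site) : Finset Site := S.biUnion nbrs \ S

/-- ⊞: the tb-tiled configurations whose particles of type 2 occupy an L×L square in dual
coordinates filling Λ⁻ (type-2 sites in Λ⁻⁻, surrounding type-1 sites in Λ⁻); these are
the two largest checkerboard droplets (one of each parity). -/
def boxPlus (L : ℕ) : Set (Config (latBox L)) :=
  {η | ∃ p : Site,
      (∀ x, η.val x = 2 ↔ x ∈ dualRect p L L) ∧
      (∀ x, η.val x = 1 ↔ x ∈ siteBorder (dualRect p L L)) ∧
      dualRect p L L ⊆ inner2 (latBox L) ∧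
      siteBorder (dualRect p L L) ⊆ inner1 (latBox L)}

/-- The active-bond relation between sites. -/
def bondRel {Λ : Finset Site} (η : Config Λ) (x y : Site) : Prop :=
  x ∈ inner1 Λ ∧ y ∈ inner1 Λ ∧ adjacent x y ∧
  ((η.val x = 1 ∧ η.val y = 2) ∨ (η.val x = 2 ∧ η.val y = 1))

/-- C is a cluster of η: a maximal connected component of the occupied sites under the
active-bond relation. -/
def IsCluster {Λ : Finset Site} (η : Config Λ) (C : Finset Site) : Prop :=
  ∃ x : Site, η.val x ≠ 0 ∧ ∀ y : Site, y ∈ C ↔ Relation.ReflTransGen (bondRel η) x y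

/-- The occupied sites of η form a single cluster. -/
def SingleCluster {Λ : Finset Site} (η : Config Λ) : Prop :=
  ∃ x : Site, η.val x ≠ 0 ∧
    ∀ y : Site, η.val y ≠ 0 → Relation.ReflTransGen (bondRel η) x y

/-- Dual coordinates, renormalized to land in ℤ² (within a fixed parity class this maps
dual neighbours to adjacent cells). -/
def cellOf (x : Site) : Cell := ((x.1 - x.2).fdiv 2, (x.1 + x.2).fdiv 2)

/-- The sites of Λ occupied by particles of type 2. -/
def type2Sites {Λ : Finset Site} (η : Config Λ) : Finset Site :=
  Λ.filter (fun x => η.val x = 2)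

/-- Tile support of a configuration: the polyomino in dual coordinates given by the unit
squares centered at the particles of type 2. -/
def tileSupport {Λ : Finset Site} (η : Config Λ) : Finset Cell :=
  (type2Sites η).image cellOf

/- ----------  Polyominoes ---------- -/

/-- Perimeter of a polyomino (number of boundary edges, inner boundaries included). -/
def perim (A : Finset Cell) : ℕ :=
  A.sum (fun c => ((nbrs c).filter (fun d => d ∉ A)).card)

def adjIn (A : Finset Cell) (x y : Cell) : Prop := x ∈ A ∧ y ∈ A ∧ adjacent x y

/-- Connectedness of a polyomino. -/
def PolyConnected (A : Finset Cell) : Prop :=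
  A.Nonempty ∧ ∀ x ∈ A, ∀ y ∈ A, Relation.ReflTransGen (adjIn A) x y

/-- Number of holes: bounded (= finite) connected components of the complement. -/
noncomputable def numHoles (A : Finset Cell) : ℕ :=
  Set.ncard {C : Set Cell | ∃ d : Cell, d ∉ A ∧
    C = {e : Cell | Relation.ReflTransGen (fun u v => adjacent u v ∧ u ∉ A ∧ v ∉ A) d e} ∧
    C.Finite}

/-- The four cells having lattice point v as a corner. -/
def cellsAt (v : Cell) : Finset Cell :=
  {(v.1 - 1, v.2 - 1), (v.1 - 1, v.2), (v.1, v.2 - 1), v}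

/-- The lattice points that are corners of cells of A. -/
def vertexSet (A : Finset Cell) : Finset Cell :=
  A.biUnion (fun c => {c, (c.1 + 1, c.2), (c.1, c.2 + 1), (c.1 + 1, c.2 + 1)})

def occAt (A : Finset Cell) (v : Cell) : ℕ := ((cellsAt v).filter (fun c => c ∈ A)).card

/-- Number of convex corners ψ(A): vertices with exactly one incident occupied cell. -/
def convexCorners (A : Finset Cell) : ℕ :=
  (vertexSet A).sum (fun v => if occAt A v = 1 then 1 else 0)

/-- Number of concave corners φ(A): a vertex with three incident occupied cells counts
once, a vertex with two diagonally opposite occupied cells counts twice. -/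
def concaveCorners (A : Finset Cell) : ℕ :=
  (vertexSet A).sum (fun v =>
    if occAt A v = 3 then 1
    else if occAt A v = 2 ∧ (((v.1 - 1, v.2 - 1) ∈ A ∧ v ∈ A) ∨
          ((v.1 - 1, v.2) ∈ A ∧ (v.1, v.2 - 1) ∈ A)) then 2
    else 0)

/-- T(A) = 2P(A) + ψ(A) − φ(A). -/
def Tpoly (A : Finset Cell) : ℤ :=
  2 * (perim A : ℤ) + (convexCorners A : ℤ) - (concaveCorners A : ℤ)

/-- For connected polyominoes, T(A) = 2P(A) + 4 − 4Q(A). -/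
noncomputable def Tconn (A : Finset Cell) : ℤ :=
  2 * (perim A : ℤ) + 4 - 4 * (numHoles A : ℤ)

/-- Width (number of columns) of the circumscribing rectangle. -/
def polyWidth (A : Finset Cell) : ℤ :=
  (WithBot.unbotD 0 (A.image Prod.fst).max) - (WithTop.untopD 0 (A.image Prod.fst).min) + 1

/-- Height (number of rows) of the circumscribing rectangle. -/
def polyHeight (A : Finset Cell) : ℤ :=
  (WithBot.unbotD 0 (A.image Prod.snd).max) - (WithTop.untopD 0 (A.image Prod.snd).min) + 1

/-- A polyomino is monotone if its perimeter equals the perimeter of its circumscribing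
rectangle. -/
def MonotonePoly (A : Finset Cell) : Prop :=
  (perim A : ℤ) = 2 * (polyWidth A + polyHeight A)

/-- The reference standard polyomino: an (l+ζ)×l rectangle (quasi-square, ζ ∈ {0,1})
with a bar of length k attached to a longest side, starting at offset a. -/
def baseStd (l ζ a k : ℕ) : Finset Cell :=
  ((Finset.range (l + ζ)) ×ˢ (Finset.range l)).image
      (fun q => (((q.1 : ℤ), (q.2 : ℤ)) : Cell))
    ∪ (Finset.range k).image (fun i => ((((a + i : ℕ) : ℤ), (l : ℤ)) : Cell))

/-- The eight symmetries of the square lattice. -/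
def dihedralMaps : List (Cell → Cell) :=
  [fun c => (c.1, c.2), fun c => (-c.1, c.2), fun c => (c.1, -c.2), fun c => (-c.1, -c.2),
   fun c => (c.2, c.1), fun c => (-c.2, c.1), fun c => (c.2, -c.1), fun c => (-c.2, -c.1)]

/-- A standard polyomino: a quasi-square with possibly a bar attached to one of its
longest sides (up to lattice symmetries and translations). -/
def IsStandardPoly (A : Finset Cell) : Prop :=
  ∃ l ζ a k : ℕ, 1 ≤ l ∧ ζ ≤ 1 ∧ a + k ≤ l + ζ ∧
    ∃ f ∈ dihedralMaps, ∃ t : Cell,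
      A = (baseStd l ζ a k).image (fun c => (((f c).1 + t.1, (f c).2 + t.2) : Cell))

/- ----------  tb-tiled configurations ---------- -/

/-- V_{*,k}: configurations with exactly k particles of type 2, all lying in Λ⁻⁻. -/
def VStar (Λ : Finset Site) (k : ℕ) : Set (Config Λ) :=
  {η | numType2 η = k ∧ ∀ x, η.val x = 2 → x ∈ inner2 Λ}

/-- V_{*,k}^{4k}: configurations of V_{*,k} with exactly 4k active bonds and no isolated
particle of type 1 (the tb-tiled configurations with k particles of type 2). -/
def VTiled (Λ : Finset Site) (k : ℕ) : Set (Config Λ) :=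
  {η | η ∈ VStar Λ k ∧ numBonds η = 4 * k ∧
    ∀ x, η.val x = 1 → ∃ y ∈ nbrs x, η.val y = 2}

/-- All particles of type 2 have the same (site) parity. -/
def SameParity2 {Λ : Finset Site} (η : Config Λ) : Prop :=
  ∀ x y : Site, η.val x = 2 → η.val y = 2 → (x.1 + x.2) % 2 = (y.1 + y.2) % 2

/-- A standard configuration: tile support a standard polyomino (all type-2 particles of
one parity). -/
def IsStandardConfig {Λ : Finset Site} (η : Config Λ) : Prop :=
  SameParity2 η ∧ IsStandardPoly (tileSupport η)

/-- A tb-tiled configuration: at least one particle of type 2, every particle of type 2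
saturated, no isolated particle of type 1. -/
def IsTbTiled {Λ : Finset Site} (η : Config Λ) : Prop :=
  (∃ x, η.val x = 2) ∧
  (∀ x, η.val x = 2 → ∀ y ∈ nbrs x, η.val y = 1) ∧
  (∀ x, η.val x = 1 → ∃ y ∈ nbrs x, η.val y = 2)

/-- η is the tb-tiled droplet with type-2 sites S: type-2 exactly on S, type-1 exactly
on the border of S, empty elsewhere. -/
def IsTbDroplet {Λ : Finset Site} (η : Config Λ) (S : Finset Site) : Prop :=
  (∀ x, η.val x = 2 ↔ x ∈ S) ∧ (∀ x, η.val x = 1 ↔ x ∈ siteBorder S)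

/- ----------  cluster-wise quantities ---------- -/

def numType1In {Λ : Finset Site} (η : Config Λ) (C : Finset Site) : ℕ :=
  (C.filter (fun x => η.val x = 1)).card

def numType2In {Λ : Finset Site} (η : Config Λ) (C : Finset Site) : ℕ :=
  (C.filter (fun x => η.val x = 2)).card

def numBondsIn {Λ : Finset Site} (η : Config Λ) (C : Finset Site) : ℕ :=
  ((C ×ˢ C).filter (fun q => q.1 ∈ inner1 Λ ∧ q.2 ∈ inner1 Λ ∧ adjacent q.1 q.2 ∧
    η.val q.1 = 1 ∧ η.val q.2 = 2)).card

def tileSupportIn {Λ : Finset Site} (η : Config Λ) (C : Finset Site) : Finset Cell :=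
  (C.filter (fun x => η.val x = 2)).image cellOf

/-- Number of active bonds incident to the site x. -/
def bondDeg {Λ : Finset Site} (η : Config Λ) (x : Site) : ℕ :=
  ((nbrs x).filter (fun y => x ∈ inner1 Λ ∧ y ∈ inner1 Λ ∧
    ((η.val x = 1 ∧ η.val y = 2) ∨ (η.val x = 2 ∧ η.val y = 1)))).card

/-- Number of missing bonds of the type-1 particles of C. -/
def missingBonds {Λ : Finset Site} (η : Config Λ) (C : Finset Site) : ℤ :=
  ∑ x ∈ C.filter (fun x => η.val x = 1), (4 - (bondDeg η x : ℤ))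

/- ----------  geometry for the energy-reduction mechanisms ---------- -/

/-- A site is lattice-connecting: there is a n.n. path of empty sites from it to ∂⁻Λ. -/
def LatticeConnecting {Λ : Finset Site} (η : Config Λ) (x : Site) : Prop :=
  ∃ l : List Site, List.Chain adjacent x l ∧
    (x :: l).getLast (List.cons_ne_nil x l) ∈ intBdry Λ ∧
    ∀ y ∈ l, y ∈ Λ ∧ η.val y = 0

/-- A pending dimer (x,y): a lattice-connecting type-1 particle x whose unique active
bond is with the adjacent type-2 particle y, which has at most three active bonds. -/
def PendingDimer {Λ : Finset Site} (η : Config Λ) (x y : Site) : Prop :=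
  bondRel η x y ∧ η.val x = 1 ∧ η.val y = 2 ∧ LatticeConnecting η x ∧
  bondDeg η x = 1 ∧ bondDeg η y ≤ 3

/-- The sites of a horizontal (in dual coordinates) beam of length l: l+1 particles of
type 1 at mutual dual distance 1, with left-most site p. -/
def beamSites (p : Site) (l : ℕ) : Finset Site :=
  (Finset.range (l + 1)).image (fun i : ℕ => ((p.1 + (i : ℤ), p.2 - (i : ℤ)) : Site))

/-- The center row of the (south) support of the beam. -/
def centerSites (p : Site) (l : ℕ) : Finset Site :=
  (Finset.range l).image (fun i : ℕ => ((p.1 + (i : ℤ), p.2 - 1 - (i : ℤ)) : Site))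

/-- The basement row of the (south) support of the beam. -/
def basementSites (p : Site) (l : ℕ) : Finset Site :=
  (Finset.range (l + 1)).image (fun i : ℕ => ((p.1 - 1 + (i : ℤ), p.2 - 1 - (i : ℤ)) : Site))

/-- The (south) support of a beam/bridge. -/
def bridgeSupport (p : Site) (l : ℕ) : Finset Site :=
  beamSites p l ∪ centerSites p l ∪ basementSites p l

/-- The 12 sites of a slot: a 4×4 block minus its four corner sites; p is the lower-left
corner of the block. -/
def slotSites (p : Site) : Finset Site :=
  ((Finset.range 4 ×ˢ Finset.range 4).image
      (fun ij => ((p.1 + (ij.1 : ℤ), p.2 + (ij.2 : ℤ)) : Site))) \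
    {(p.1, p.2), (p.1 + 3, p.2), (p.1, p.2 + 3), (p.1 + 3, p.2 + 3)}

/-- The slot-conjugate (diagonally opposite) ordered pairs of central sites of a slot. -/
def slotDiagPairs (p : Site) : List (Site × Site) :=
  [((p.1 + 1, p.2 + 1), (p.1 + 2, p.2 + 2)), ((p.1 + 2, p.2 + 2), (p.1 + 1, p.2 + 1)),
   ((p.1 + 1, p.2 + 2), (p.1 + 2, p.2 + 1)), ((p.1 + 2, p.2 + 1), (p.1 + 1, p.2 + 2))]

/-- The type-2 sites of the bar added on side d (0 = north, 1 = south, 2 = east,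
3 = west, in dual coordinates) of the m×n dual rectangle with corner p. -/
def sideBar (p : Site) (m n : ℕ) (d : Fin 4) : Finset Site :=
  if d = 0 then dualRect (p.1 + (n : ℤ), p.2 + (n : ℤ)) m 1
  else if d = 1 then dualRect (p.1 - 1, p.2 - 1) m 1
  else if d = 2 then dualRect (p.1 + (m : ℤ), p.2 - (m : ℤ)) 1 n
  else dualRect (p.1 - 1, p.2 + 1) 1 n

/-- The length of side d of an m×n dual rectangle. -/
def sideLen (m n : ℕ) (d : Fin 4) : ℕ := if (d : ℕ) ≤ 1 then m else n

/-- The type-2 sites left after removing the outermost bar on side d of the m×n dual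
rectangle with corner p. -/
def shrunkRect (p : Site) (m n : ℕ) (d : Fin 4) : Finset Site :=
  if d = 0 then dualRect p m (n - 1)
  else if d = 1 then dualRect (p.1 + 1, p.2 + 1) m (n - 1)
  else if d = 2 then dualRect p (m - 1) n
  else dualRect (p.1 + 1, p.2 - 1) (m - 1) n



section AuxCompletingTile

lemma adjacent_iff_aux {x y : Site} : adjacent x y ↔ y ∈ nbrs x := by
  obtain ⟨a,b⟩ := x; obtain ⟨c,d⟩ := y
  simp only [adjacent, nbrs, Finset.mem_insert, Finset.mem_singleton, Prod.mk.injEq]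
  rcases abs_cases (a - c) with ⟨h1,h2⟩|⟨h1,h2⟩ <;>
    rcases abs_cases (b - d) with ⟨h3,h4⟩|⟨h3,h4⟩ <;> omega

lemma adjacent_comm_aux {x y : Site} : adjacent x y ↔ adjacent y x := by
  simp only [adjacent]; rw [abs_sub_comm, abs_sub_comm x.2]

lemma card_nbrs_aux (x : Site) : (nbrs x).card = 4 := by
  obtain ⟨a,b⟩ := x
  simp only [nbrs]
  rw [Finset.card_insert_of_notMem, Finset.card_insert_of_notMem,
    Finset.card_insert_of_notMem, Finset.card_singleton] <;>
  · simp only [Finset.mem_insert, Finset.mem_singleton, Prod.mk.injEq, not_or]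
    omega

lemma not_self_nbrs_aux (x : Site) : x ∉ nbrs x := by
  rw [← adjacent_iff_aux]; simp [adjacent]

lemma nbrs_not_adjacent_aux {i x y : Site} (hx : x ∈ nbrs i) (hy : y ∈ nbrs i) :
    ¬ adjacent x y := by
  rw [adjacent_iff_aux]
  obtain ⟨a,b⟩ := i; obtain ⟨x1,x2⟩ := x; obtain ⟨y1,y2⟩ := y
  simp only [nbrs, Finset.mem_insert, Finset.mem_singleton, Prod.mk.injEq] at hx hy ⊢
  rcases hx with ⟨h1,h2⟩|⟨h1,h2⟩|⟨h1,h2⟩|⟨h1,h2⟩ <;>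
    rcases hy with ⟨g1,g2⟩|⟨g1,g2⟩|⟨g1,g2⟩|⟨g1,g2⟩ <;> omega

end AuxCompletingTile

set_option maxHeartbeats 2000000 in
/-- completing a tile with at least three junction sites occupied by
particles of type 1 into a tb-tile does not raise the energy. -/
theorem completing_tile_lowers_energy
    (U Δ1 Δ2 : ℝ) (hU : 0 < U) (hΔ1 : 0 < Δ1) (hΔ1U : Δ1 < U)
    (hgap : 2 * U < Δ2 - Δ1) (hsum : Δ1 + Δ2 < 4 * U)
    (Λ : Finset Site) (η η' : Config Λ) (i : Site) (hi : i ∈ inner2 Λ)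
    (h3 : 3 ≤ ((nbrs i).filter (fun y => η.val y = 1)).card)
    (hη' : ∀ x, η'.val x = if x = i then 2 else if x ∈ nbrs i then 1 else η.val x) :
    energy U Δ1 Δ2 η' ≤ energy U Δ1 Δ2 η := by
  classical
  have hfin3 : ∀ v : Fin 3, v = 0 ∨ v = 1 ∨ v = 2 := by decide
  have hiI : i ∈ inner1 Λ := (Finset.mem_sdiff.mp hi).1
  have hnI : nbrs i ⊆ inner1 Λ := by
    have h2 := (Finset.mem_sdiff.mp hi).2
    simp only [intBdry, Finset.mem_filter, not_and, not_not] at h2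
    exact h2 hiI
  have hI1 : inner1 Λ ⊆ Λ := Finset.sdiff_subset
  set T : Finset Site := insert i (nbrs i) with hT
  have hTsub : T ⊆ Λ := by
    intro x hx
    rcases Finset.mem_insert.mp hx with rfl | hx
    · exact hI1 hiI
    · exact hI1 (hnI hx)
  have hins : i ∉ nbrs i := not_self_nbrs_aux i
  have hv_i : η'.val i = 2 := by rw [hη']; simp
  have hv_n : ∀ k ∈ nbrs i, η'.val k = 1 := by
    intro k hk
    rw [hη', if_neg (by rintro rfl; exact hins hk), if_pos hk]
  have hv_out : ∀ x, x ∉ T → η'.val x = η.val x := by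
    intro x hx
    simp only [hT, Finset.mem_insert, not_or] at hx
    rw [hη', if_neg hx.1, if_neg hx.2]
  set S1 := (nbrs i).filter (fun y => η.val y = 1) with hS1
  set S2 := (nbrs i).filter (fun y => η.val y = 2) with hS2
  -- particle counts
  have key1 : ∀ (ξ : Config Λ) (v : Fin 3), (Λ.filter (fun x => ξ.val x = v)).card
      = (T.filter (fun x => ξ.val x = v)).card + ((Λ \ T).filter (fun x => ξ.val x = v)).card := by
    intro ξ v
    rw [← Finset.card_union_of_disjoint
        (Finset.disjoint_filter_filter Finset.disjoint_sdiff),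
      ← Finset.filter_union, Finset.union_sdiff_of_subset hTsub]
  have hout : ∀ v : Fin 3, (Λ \ T).filter (fun x => η'.val x = v)
      = (Λ \ T).filter (fun x => η.val x = v) := by
    intro v
    refine Finset.filter_congr fun x hx => ?_
    rw [hv_out x (Finset.mem_sdiff.mp hx).2]
  have hT1' : T.filter (fun x => η'.val x = 1) = nbrs i := by
    ext x
    simp only [Finset.mem_filter, hT, Finset.mem_insert]
    constructor
    · rintro ⟨rfl | hx, hv⟩
      · rw [hv_i] at hv; exact absurd hv (by decide)
      · exact hx
    · intro hx; exact ⟨Or.inr hx, hv_n x hx⟩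
  have hT2' : T.filter (fun x => η'.val x = 2) = {i} := by
    ext x
    simp only [Finset.mem_filter, hT, Finset.mem_insert, Finset.mem_singleton]
    constructor
    · rintro ⟨rfl | hx, hv⟩
      · rfl
      · rw [hv_n x hx] at hv; exact absurd hv (by decide)
    · rintro rfl; exact ⟨Or.inl rfl, hv_i⟩
  have hT1 : (T.filter (fun x => η.val x = 1)).card
      = S1.card + (if η.val i = 1 then 1 else 0) := by
    rw [hT, Finset.filter_insert]
    split
    · rw [Finset.card_insert_of_notMem (fun h => hins (Finset.mem_filter.mp h).1)]
    · simp [hS1]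
  have hT2 : (T.filter (fun x => η.val x = 2)).card
      = S2.card + (if η.val i = 2 then 1 else 0) := by
    rw [hT, Finset.filter_insert]
    split
    · rw [Finset.card_insert_of_notMem (fun h => hins (Finset.mem_filter.mp h).1)]
    · simp [hS2]
  have hcount1 : (numType1 η' : ℤ) + S1.card + (if η.val i = 1 then 1 else 0)
      = (numType1 η : ℤ) + 4 := by
    have e1 := key1 η' 1
    have e2 := key1 η 1
    rw [hT1', card_nbrs_aux, hout 1] at e1
    rw [hT1] at e2
    unfold numType1
    split_ifs with hti
    · rw [if_pos hti] at e2; push_cast; omega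
    · rw [if_neg hti] at e2; push_cast; omega
  have hcount2 : (numType2 η' : ℤ) + S2.card + (if η.val i = 2 then 1 else 0)
      = (numType2 η : ℤ) + 1 := by
    have e1 := key1 η' 2
    have e2 := key1 η 2
    rw [hT2', Finset.card_singleton, hout 2] at e1
    rw [hT2] at e2
    unfold numType2
    split_ifs with hti
    · rw [if_pos hti] at e2; push_cast; omega
    · rw [if_neg hti] at e2; push_cast; omega
  -- bonds
  set P := inner1 Λ ×ˢ inner1 Λ with hP
  have keyB : ∀ ξ : Config Λ, numBonds ξ
      = (P.filter (fun p => (adjacent p.1 p.2 ∧ ξ.val p.1 = 1 ∧ ξ.val p.2 = 2)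
            ∧ (p.1 ∈ T ∨ p.2 ∈ T))).card
        + (P.filter (fun p => (adjacent p.1 p.2 ∧ ξ.val p.1 = 1 ∧ ξ.val p.2 = 2)
            ∧ ¬(p.1 ∈ T ∨ p.2 ∈ T))).card := by
    intro ξ
    unfold numBonds
    rw [← Finset.card_filter_add_card_filter_not
        (p := fun p : Site × Site => p.1 ∈ T ∨ p.2 ∈ T), Finset.filter_filter,
      Finset.filter_filter]
  set A := P.filter (fun p => (adjacent p.1 p.2 ∧ η.val p.1 = 1 ∧ η.val p.2 = 2)
      ∧ (p.1 ∈ T ∨ p.2 ∈ T)) with hA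
  set A' := P.filter (fun p => (adjacent p.1 p.2 ∧ η'.val p.1 = 1 ∧ η'.val p.2 = 2)
      ∧ (p.1 ∈ T ∨ p.2 ∈ T)) with hA'
  have hRm : P.filter (fun p => (adjacent p.1 p.2 ∧ η'.val p.1 = 1 ∧ η'.val p.2 = 2)
        ∧ ¬(p.1 ∈ T ∨ p.2 ∈ T))
      = P.filter (fun p => (adjacent p.1 p.2 ∧ η.val p.1 = 1 ∧ η.val p.2 = 2)
        ∧ ¬(p.1 ∈ T ∨ p.2 ∈ T)) := by
    refine Finset.filter_congr fun p _ => ?_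
    by_cases h1 : p.1 ∈ T
    · simp [h1]
    by_cases h2 : p.2 ∈ T
    · simp [h2]
    rw [hv_out _ h1, hv_out _ h2]
  set Fresh := (nbrs i) ×ˢ ({i} : Finset Site) with hFresh
  have hFreshA' : Fresh ⊆ A' := by
    intro p hp
    obtain ⟨hp1, hp2⟩ := Finset.mem_product.mp hp
    rw [Finset.mem_singleton] at hp2
    refine Finset.mem_filter.mpr ⟨Finset.mem_product.mpr ⟨hnI hp1, ?_⟩, ⟨?_, ?_, ?_⟩, ?_⟩
    · rw [hp2]; exact hiI
    · rw [hp2]; exact adjacent_comm_aux.mp (adjacent_iff_aux.mpr hp1)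
    · exact hv_n _ hp1
    · rw [hp2]; exact hv_i
    · exact Or.inl (Finset.mem_insert.mpr (Or.inr hp1))
  set Bad := (if η.val i = 2 then S1 ×ˢ ({i} : Finset Site) else ∅)
      ∪ ((if η.val i = 1 then ({i} : Finset Site) ×ˢ S2 else ∅)
        ∪ S2.biUnion (fun j => (nbrs j \ {i}) ×ˢ ({j} : Finset Site))) with hBad
  have hclass : A \ Bad ⊆ A' \ Fresh := by
    rintro ⟨x, y⟩ hp
    obtain ⟨hpA, hnotbad⟩ := Finset.mem_sdiff.mp hp
    obtain ⟨hpP, ⟨hadj, h1, h2⟩, htouch⟩ := Finset.mem_filter.mp hpA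
    by_cases hxi : x = i
    · subst hxi
      exfalso
      apply hnotbad
      refine Finset.mem_union.mpr (Or.inr (Finset.mem_union.mpr (Or.inl ?_)))
      rw [if_pos h1]
      exact Finset.mem_product.mpr ⟨Finset.mem_singleton.mpr rfl,
        Finset.mem_filter.mpr ⟨adjacent_iff_aux.mp hadj, h2⟩⟩
    by_cases hxn : x ∈ nbrs i
    · by_cases hyi : y = i
      · subst hyi
        exfalso
        apply hnotbad
        refine Finset.mem_union.mpr (Or.inl ?_)
        rw [if_pos h2]
        exact Finset.mem_product.mpr ⟨Finset.mem_filter.mpr ⟨hxn, h1⟩,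
          Finset.mem_singleton.mpr rfl⟩
      by_cases hyn : y ∈ nbrs i
      · exact absurd hadj (nbrs_not_adjacent_aux hxn hyn)
      have hyT : y ∉ T := by simp [hT, hyi, hyn]
      refine Finset.mem_sdiff.mpr ⟨Finset.mem_filter.mpr
        ⟨hpP, ⟨hadj, hv_n x hxn, by rw [hv_out y hyT]; exact h2⟩, htouch⟩, ?_⟩
      intro hF
      exact hyi (Finset.mem_singleton.mp (Finset.mem_product.mp hF).2)
    have hxT : x ∉ T := by simp [hT, hxi, hxn]
    rcases htouch with hxT' | hyT'
    · exact absurd hxT' hxT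
    rcases Finset.mem_insert.mp hyT' with rfl | hyn
    · exact absurd (adjacent_iff_aux.mp (adjacent_comm_aux.mp hadj)) hxn
    exfalso
    apply hnotbad
    refine Finset.mem_union.mpr (Or.inr (Finset.mem_union.mpr (Or.inr ?_)))
    refine Finset.mem_biUnion.mpr ⟨y, Finset.mem_filter.mpr ⟨hyn, h2⟩, ?_⟩
    refine Finset.mem_product.mpr ⟨Finset.mem_sdiff.mpr
      ⟨adjacent_iff_aux.mp (adjacent_comm_aux.mp hadj), ?_⟩, Finset.mem_singleton.mpr rfl⟩
    simpa using hxi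
  have hdisj : Disjoint Fresh (A \ Bad) := by
    rw [Finset.disjoint_left]
    intro p hp hp2
    exact (Finset.mem_sdiff.mp (hclass hp2)).2 hp
  have hsubA' : Fresh ∪ (A \ Bad) ⊆ A' :=
    Finset.union_subset hFreshA' (fun p hp => (Finset.mem_sdiff.mp (hclass hp)).1)
  have hFcard : Fresh.card = 4 := by
    rw [hFresh, Finset.card_product, card_nbrs_aux, Finset.card_singleton, mul_one]
  have hBadcard : (Bad.card : ℤ) ≤ (if η.val i = 2 then (S1.card : ℤ) else 0)
      + (if η.val i = 1 then (S2.card : ℤ) else 0) + 3 * S2.card := by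
    have hb3 : ((S2.biUnion (fun j => (nbrs j \ {i}) ×ˢ ({j} : Finset Site))).card : ℤ)
        ≤ 3 * S2.card := by
      have := Finset.card_biUnion_le
        (s := S2) (t := fun j => (nbrs j \ {i}) ×ˢ ({j} : Finset Site))
      have hbd : ∀ j ∈ S2, ((nbrs j \ {i}) ×ˢ ({j} : Finset Site)).card ≤ 3 := by
        intro j hj
        have hij : i ∈ nbrs j := adjacent_iff_aux.mp
          (adjacent_comm_aux.mp (adjacent_iff_aux.mpr (Finset.mem_filter.mp hj).1))
        rw [Finset.card_product, Finset.card_singleton, mul_one,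
          Finset.card_sdiff_of_subset (Finset.singleton_subset_iff.mpr hij),
          card_nbrs_aux, Finset.card_singleton]
      have := le_trans this (Finset.sum_le_card_nsmul S2 _ 3 hbd)
      push_cast at this ⊢
      calc ((S2.biUnion (fun j => (nbrs j \ {i}) ×ˢ ({j} : Finset Site))).card : ℤ)
          ≤ (S2.card : ℤ) * 3 := by exact_mod_cast this
        _ = 3 * S2.card := by ring
    have h12 : ((if η.val i = 2 then S1 ×ˢ ({i} : Finset Site) else ∅).card : ℤ)
        = (if η.val i = 2 then (S1.card : ℤ) else 0) := by
      split <;> simp [Finset.card_product]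
    have h11 : ((if η.val i = 1 then ({i} : Finset Site) ×ˢ S2 else ∅).card : ℤ)
        = (if η.val i = 1 then (S2.card : ℤ) else 0) := by
      split <;> simp [Finset.card_product]
    calc (Bad.card : ℤ) ≤
        ((if η.val i = 2 then S1 ×ˢ ({i} : Finset Site) else ∅).card : ℤ)
        + (((if η.val i = 1 then ({i} : Finset Site) ×ˢ S2 else ∅).card : ℤ)
          + ((S2.biUnion (fun j => (nbrs j \ {i}) ×ˢ ({j} : Finset Site))).card : ℤ)) := by
          rw [hBad]
          push_cast
          have := Finset.card_union_le
            (if η.val i = 2 then S1 ×ˢ ({i} : Finset Site) else ∅)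
            ((if η.val i = 1 then ({i} : Finset Site) ×ˢ S2 else ∅)
              ∪ S2.biUnion (fun j => (nbrs j \ {i}) ×ˢ ({j} : Finset Site)))
          have h2 := Finset.card_union_le
            (if η.val i = 1 then ({i} : Finset Site) ×ˢ S2 else ∅)
            (S2.biUnion (fun j => (nbrs j \ {i}) ×ˢ ({j} : Finset Site)))
          push_cast at this h2 ⊢
          omega
      _ ≤ _ := by rw [h12, h11]; linarith
  have hBB : (numBonds η : ℤ) + 4 ≤ (numBonds η' : ℤ) + Bad.card := by
    have e1 := keyB η
    have e2 := keyB η'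
    rw [hRm] at e2
    have h5 : Fresh.card + (A \ Bad).card = (Fresh ∪ (A \ Bad)).card :=
      (Finset.card_union_of_disjoint hdisj).symm
    have h6 : (Fresh ∪ (A \ Bad)).card ≤ A'.card := Finset.card_le_card hsubA'
    have h7 : A.card ≤ (A \ Bad).card + Bad.card := Finset.card_le_card_sdiff_add_card
    rw [← hA] at e1
    rw [← hA'] at e2
    push_cast
    omega
  -- final arithmetic
  have ha1u : S1.card ≤ 4 := by
    calc S1.card ≤ (nbrs i).card := Finset.card_filter_le _ _
      _ = 4 := card_nbrs_aux i
  have ha12 : S1.card + S2.card ≤ 4 := by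
    have hd : Disjoint S1 S2 := by
      rw [Finset.disjoint_left]
      intro x hx1 hx2
      rw [Finset.mem_filter] at hx1 hx2
      rw [hx1.2] at hx2
      exact absurd hx2.2 (by decide)
    calc S1.card + S2.card = (S1 ∪ S2).card := (Finset.card_union_of_disjoint hd).symm
      _ ≤ (nbrs i).card := Finset.card_le_card (Finset.union_subset
          (Finset.filter_subset _ _) (Finset.filter_subset _ _))
      _ = 4 := card_nbrs_aux i
  have hEB : (numBonds η : ℤ) + 4 ≤ (numBonds η' : ℤ)
      + ((if η.val i = 2 then (S1.card : ℤ) else 0)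
        + (if η.val i = 1 then (S2.card : ℤ) else 0) + 3 * S2.card) := by
    linarith
  unfold energy
  have ha1u : S1.card ≤ 4 := by
    calc S1.card ≤ (nbrs i).card := Finset.card_filter_le _ _
      _ = 4 := card_nbrs_aux i
  have ha12 : S1.card + S2.card ≤ 4 := by
    have hd : Disjoint S1 S2 := by
      rw [Finset.disjoint_left]
      intro x hx1 hx2
      rw [Finset.mem_filter] at hx1 hx2
      rw [hx1.2] at hx2
      exact absurd hx2.2 (by decide)
    calc S1.card + S2.card = (S1 ∪ S2).card := (Finset.card_union_of_disjoint hd).symm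
      _ ≤ (nbrs i).card := Finset.card_le_card (Finset.union_subset
          (Finset.filter_subset _ _) (Finset.filter_subset _ _))
      _ = 4 := card_nbrs_aux i
  have hEB : (numBonds η : ℤ) + 4 ≤ (numBonds η' : ℤ)
      + ((if η.val i = 2 then (S1.card : ℤ) else 0)
        + (if η.val i = 1 then (S2.card : ℤ) else 0) + 3 * S2.card) := by
    linarith
  have hcases : (S1.card = 4 ∧ S2.card = 0) ∨ (S1.card = 3 ∧ S2.card = 0)
      ∨ (S1.card = 3 ∧ S2.card = 1) := by omega
  rcases hfin3 (η.val i) with hw | hw | hw <;>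
    rcases hcases with ⟨ha1e, ha2e⟩ | ⟨ha1e, ha2e⟩ | ⟨ha1e, ha2e⟩ <;>
    simp only [hw, ha1e, ha2e, show ((0:Fin 3) = 1) = False by decide,
      show ((0:Fin 3) = 2) = False by decide, show ((1:Fin 3) = 1) = True by decide,
      show ((1:Fin 3) = 2) = False by decide, show ((2:Fin 3) = 1) = False by decide,
      show ((2:Fin 3) = 2) = True by decide, if_true, if_false] at hEB hcount1 hcount2 <;>
    rify at hEB hcount1 hcount2 <;>
    nlinarith [hEB, hcount1, hcount2, hU, hΔ1, hΔ1U, hgap, hsum]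
end

section
/- Let η be a configuration containing a south-bridge b (contained in Λ⁻⁻) whose support is not tb-tiled. Then the configuration η′ obtained from η by tb-tiling the support of b (i.e., replacing the configuration on the support of b by the one in which every tile of the support is a tb-tile) satisfies H(η′) < H(η). -/
/- ======================  Auxiliary development  ====================== -/

section AuxTB

open Finset

lemma mem_nbrs' {x y : Site} : x ∈ nbrs y ↔ adjacent x y := by
  simp only [nbrs, Finset.mem_insert, Finset.mem_singleton, adjacent, Prod.ext_iff]
  rcases abs_cases (x.1 - y.1) with ⟨h1, _⟩ | ⟨h1, _⟩ <;>
    rcases abs_cases (x.2 - y.2) with ⟨h2, _⟩ | ⟨h2, _⟩ <;> omega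

lemma adj_symm' {x y : Site} (h : adjacent x y) : adjacent y x := by
  unfold adjacent at *
  rw [abs_sub_comm y.1, abs_sub_comm y.2]
  exact h

lemma quad_sum {M : Type*} [AddCommMonoid M] {a b c d : Site} (f : Site → M)
    (hab : a ≠ b) (hac : a ≠ c) (had : a ≠ d) (hbc : b ≠ c) (hbd : b ≠ d) (hcd : c ≠ d) :
    ∑ x ∈ ({a, b, c, d} : Finset Site), f x = f a + f b + f c + f d := by
  rw [show ({a, b, c, d} : Finset Site) = insert a (insert b (insert c {d})) from rfl]
  rw [Finset.sum_insert (by simp [hab, hac, had]), Finset.sum_insert (by simp [hbc, hbd]),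
    Finset.sum_insert (by simp [hcd]), Finset.sum_singleton]
  rw [← add_assoc, ← add_assoc]

lemma quad_card {a b c d : Site}
    (hab : a ≠ b) (hac : a ≠ c) (had : a ≠ d) (hbc : b ≠ c) (hbd : b ≠ d) (hcd : c ≠ d) :
    ({a, b, c, d} : Finset Site).card = 4 := by
  rw [Finset.card_insert_of_notMem (by simp [hab, hac, had]),
    Finset.card_insert_of_notMem (by simp [hbc, hbd]),
    Finset.card_insert_of_notMem (by simp [hcd]), Finset.card_singleton]

lemma inner1_subset' (Λ : Finset Site) : inner1 Λ ⊆ Λ := Finset.sdiff_subset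

lemma inner2_subset' (Λ : Finset Site) : inner2 Λ ⊆ inner1 Λ := Finset.sdiff_subset

lemma nbrs_subset_inner1 {Λ : Finset Site} {y : Site} (h : y ∈ inner2 Λ) :
    nbrs y ⊆ inner1 Λ := by
  simp only [inner2, intBdry, Finset.mem_sdiff, Finset.mem_filter] at h
  by_contra hc
  exact h.2 ⟨h.1, hc⟩

/-- local degree: number of type-1 occupied inner1-neighbours -/
def deg1 (Λ : Finset Site) (v : Site → Fin 3) (y : Site) : ℕ :=
  ((nbrs y).filter (fun x => x ∈ inner1 Λ ∧ v x = 1)).card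

/-- local energy -/
noncomputable def hloc (U Δ1 Δ2 : ℝ) (Λ : Finset Site) (v : Site → Fin 3) (y : Site) : ℝ :=
  (if v y = 1 then Δ1 else 0) + (if v y = 2 then Δ2 else 0)
    - U * (if y ∈ inner1 Λ ∧ v y = 2 then (deg1 Λ v y : ℝ) else 0)

lemma sum_ite_mem_comm (s t : Finset Site) (q : Site → Prop) [DecidablePred q] :
    (∑ x ∈ s, if x ∈ t ∧ q x then (1 : ℕ) else 0)
      = ∑ x ∈ t, if x ∈ s ∧ q x then 1 else 0 := by
  rw [← Finset.card_filter, ← Finset.card_filter]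
  congr 1
  ext x
  simp only [Finset.mem_filter]
  tauto

lemma numBonds_eq_sum {Λ : Finset Site} (η : Config Λ) :
    numBonds η = ∑ y ∈ Λ, if y ∈ inner1 Λ ∧ η.val y = 2 then deg1 Λ η.val y else 0 := by
  classical
  rw [numBonds, Finset.card_filter, Finset.sum_product, Finset.sum_comm]
  have inner : ∀ y ∈ inner1 Λ,
      (∑ x ∈ inner1 Λ, if adjacent x y ∧ η.val x = 1 ∧ η.val y = 2 then (1:ℕ) else 0)
        = if y ∈ inner1 Λ ∧ η.val y = 2 then deg1 Λ η.val y else 0 := by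
    intro y hy
    by_cases h2 : η.val y = 2
    · rw [if_pos ⟨hy, h2⟩, deg1, Finset.card_filter]
      rw [← sum_ite_mem_comm (inner1 Λ) (nbrs y) (fun x => η.val x = 1)]
      apply Finset.sum_congr rfl
      intro x _
      congr 1
      simp only [mem_nbrs', h2, and_true, eq_iff_iff]
      try tauto
    · rw [if_neg (by tauto)]
      apply Finset.sum_eq_zero
      intro x _
      rw [if_neg (by tauto)]
  rw [Finset.sum_congr rfl inner]
  apply Finset.sum_subset (inner1_subset' Λ)
  intro y _ hy
  rw [if_neg (by tauto)]

lemma energy_eq_sum (U Δ1 Δ2 : ℝ) {Λ : Finset Site} (η : Config Λ) :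
    energy U Δ1 Δ2 η = ∑ y ∈ Λ, hloc U Δ1 Δ2 Λ η.val y := by
  classical
  have h1 : (numType1 η : ℝ) = ∑ y ∈ Λ, (if η.val y = 1 then (1:ℝ) else 0) := by
    rw [numType1, Finset.card_filter]
    push_cast
    apply Finset.sum_congr rfl
    intro y _
    split_ifs <;> norm_num
  have h2 : (numType2 η : ℝ) = ∑ y ∈ Λ, (if η.val y = 2 then (1:ℝ) else 0) := by
    rw [numType2, Finset.card_filter]
    push_cast
    apply Finset.sum_congr rfl
    intro y _
    split_ifs <;> norm_num
  have hB : (numBonds η : ℝ)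
      = ∑ y ∈ Λ, (if y ∈ inner1 Λ ∧ η.val y = 2 then (deg1 Λ η.val y : ℝ) else 0) := by
    rw [numBonds_eq_sum]
    push_cast
    apply Finset.sum_congr rfl
    intro y _
    split_ifs <;> norm_num
  rw [energy, h1, h2, hB, Finset.mul_sum, Finset.mul_sum, Finset.mul_sum,
    ← Finset.sum_add_distrib, ← Finset.sum_add_distrib]
  apply Finset.sum_congr rfl
  intro y _
  rw [hloc]
  split_ifs <;> ring

/-- per-tile contribution of a center site -/
noncomputable def Aval (U Δ1 Δ2 : ℝ) (c d1 d2 : Fin 3) : ℝ :=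
  (Δ2 - U * 4) - ((if c = 1 then Δ1 else 0) + (if c = 2 then Δ2 else 0)
    - U * (if c = 2 then ((1 : ℝ) + (if d1 = 1 then 1 else 0) + 1
        + (if d2 = 1 then 1 else 0)) else 0))

/-- per-site bound for an interior basement site -/
noncomputable def Cval (U Δ1 Δ2 : ℝ) (c0 c1 d : Fin 3) : ℝ :=
  Δ1 - ((if d = 1 then Δ1 else 0) + (if d = 2 then Δ2 else 0))
    + U * (if d = 2 then ((if c1 = 1 then (1:ℝ) else 0) + 1
        + (if c0 = 1 then 1 else 0) + 1) else 0)

/-- half of a basement contribution, attributed to one adjacent tile -/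
noncomputable def Dval (U Δ1 Δ2 : ℝ) (d c : Fin 3) : ℝ :=
  (1/2) * ((if d = 1 then (0:ℝ) else Δ1) - (if d = 2 then Δ2 - 2*U else 0))
    + (if d = 2 ∧ c = 1 then U else 0)

lemma Cval_eq (U Δ1 Δ2 : ℝ) (c0 c1 d : Fin 3) :
    Cval U Δ1 Δ2 c0 c1 d = Dval U Δ1 Δ2 d c0 + Dval U Δ1 Δ2 d c1 := by
  fin_cases d <;> fin_cases c0 <;> fin_cases c1 <;> simp [Cval, Dval] <;> ring

lemma Dval_one (U Δ1 Δ2 : ℝ) (c : Fin 3) : Dval U Δ1 Δ2 1 c = 0 := by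
  simp [Dval]

/-- total per-tile contribution -/
noncomputable def Gval (U Δ1 Δ2 : ℝ) (c d1 d2 : Fin 3) : ℝ :=
  Aval U Δ1 Δ2 c d1 d2 + Dval U Δ1 Δ2 d1 c + Dval U Δ1 Δ2 d2 c

lemma Gval_cases (U Δ1 Δ2 : ℝ) (hU : 0 < U) (hΔ1 : 0 < Δ1) (hΔ1U : Δ1 < U)
    (hgap : 2 * U < Δ2 - Δ1) (hsum : Δ1 + Δ2 < 4 * U) (c d1 d2 : Fin 3) :
    Gval U Δ1 Δ2 c d1 d2 < 0 ∨ (c = 2 ∧ d1 = 1 ∧ d2 = 1) ∨ (c = 1 ∧ d1 = 2 ∧ d2 = 2) := by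
  fin_cases c <;> fin_cases d1 <;> fin_cases d2 <;>
    simp [Gval, Aval, Dval] <;> linarith

lemma Gval_nonpos (U Δ1 Δ2 : ℝ) (hU : 0 < U) (hΔ1 : 0 < Δ1) (hΔ1U : Δ1 < U)
    (hgap : 2 * U < Δ2 - Δ1) (hsum : Δ1 + Δ2 < 4 * U) (c d1 d2 : Fin 3) :
    Gval U Δ1 Δ2 c d1 d2 ≤ 0 := by
  fin_cases c <;> fin_cases d1 <;> fin_cases d2 <;>
    simp [Gval, Aval, Dval] <;> linarith

lemma key_sum (U Δ1 Δ2 : ℝ) (hU : 0 < U) (hΔ1 : 0 < Δ1) (hΔ1U : Δ1 < U)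
    (hgap : 2 * U < Δ2 - Δ1) (hsum : Δ1 + Δ2 < 4 * U)
    (l : ℕ) (hl : 1 ≤ l) (c d : ℕ → Fin 3) (hd0 : d 0 = 1) (hdl : d l = 1)
    (hnot : ¬ ((∀ i, i < l → c i = 2) ∧ (∀ j, j ≤ l → d j = 1))) :
    (∑ i ∈ Finset.range l, Aval U Δ1 Δ2 (c i) (d i) (d (i + 1)))
      + ∑ j ∈ Finset.Ico 1 l, Cval U Δ1 Δ2 (c (j - 1)) (c j) (d j) < 0 := by
  classical
  have hsum_eq : (∑ i ∈ Finset.range l, Aval U Δ1 Δ2 (c i) (d i) (d (i + 1)))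
      + ∑ j ∈ Finset.Ico 1 l, Cval U Δ1 Δ2 (c (j - 1)) (c j) (d j)
      = ∑ i ∈ Finset.range l, Gval U Δ1 Δ2 (c i) (d i) (d (i + 1)) := by
    simp only [Gval, Cval_eq, Finset.sum_add_distrib]
    have e2 : ∑ j ∈ Finset.Ico 1 l, Dval U Δ1 Δ2 (d j) (c j)
        = ∑ i ∈ Finset.range l, Dval U Δ1 Δ2 (d i) (c i) := by
      rw [Finset.range_eq_Ico, Finset.sum_eq_sum_Ico_succ_bot hl, hd0, Dval_one, zero_add]
    have e1 : ∑ j ∈ Finset.Ico 1 l, Dval U Δ1 Δ2 (d j) (c (j - 1))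
        = ∑ i ∈ Finset.range l, Dval U Δ1 Δ2 (d (i + 1)) (c i) := by
      have h1 : ∑ j ∈ Finset.Ico 1 (l + 1), Dval U Δ1 Δ2 (d j) (c (j - 1))
          = ∑ j ∈ Finset.Ico 1 l, Dval U Δ1 Δ2 (d j) (c (j - 1))
            + Dval U Δ1 Δ2 (d l) (c (l - 1)) := Finset.sum_Ico_succ_top hl _
      have h2 : ∑ j ∈ Finset.Ico 1 (l + 1), Dval U Δ1 Δ2 (d j) (c (j - 1))
          = ∑ i ∈ Finset.range l, Dval U Δ1 Δ2 (d (i + 1)) (c i) := by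
        rw [Finset.sum_Ico_eq_sum_range]
        simp only [Nat.add_sub_cancel]
        apply Finset.sum_congr rfl
        intro i _
        rw [show 1 + i - 1 = i from by omega, show 1 + i = i + 1 from by omega]
      rw [hdl, Dval_one, add_zero] at h1
      rw [← h1, h2]
    rw [e1, e2]
    ring
  rw [hsum_eq]
  have hpat : ∀ i, i < l → Gval U Δ1 Δ2 (c i) (d i) (d (i + 1)) < 0
      ∨ (c i = 2 ∧ d i = 1 ∧ d (i + 1) = 1) ∨ (c i = 1 ∧ d i = 2 ∧ d (i + 1) = 2) :=
    fun i _ => Gval_cases U Δ1 Δ2 hU hΔ1 hΔ1U hgap hsum _ _ _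
  have hex : ∃ i ∈ Finset.range l, Gval U Δ1 Δ2 (c i) (d i) (d (i + 1)) < 0 := by
    by_contra hno
    push_neg at hno
    have hall : ∀ k, k ≤ l → (d k = 1 ∧ ∀ i, i < k → c i = 2) := by
      intro k
      induction k with
      | zero => intro _; exact ⟨hd0, fun i hi => absurd hi (Nat.not_lt_zero i)⟩
      | succ n ih =>
        intro hk
        have hn := ih (by omega)
        rcases hpat n (by omega) with hlt | ⟨hc2, _, hd2⟩ | ⟨_, hdn, _⟩
        · exact absurd hlt (not_lt.2 (hno n (Finset.mem_range.2 (by omega))))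
        · refine ⟨hd2, fun i hi => ?_⟩
          rcases Nat.lt_succ_iff_lt_or_eq.1 hi with h | h
          · exact hn.2 i h
          · rw [h]; exact hc2
        · rw [hn.1] at hdn; exact absurd hdn (by decide)
    exact hnot ⟨fun i hi => (hall l le_rfl).2 i hi, fun j hj => (hall j hj).1⟩
  calc ∑ i ∈ Finset.range l, Gval U Δ1 Δ2 (c i) (d i) (d (i + 1))
      < ∑ _i ∈ Finset.range l, (0:ℝ) := by
        apply Finset.sum_lt_sum
        · exact fun i _ => Gval_nonpos U Δ1 Δ2 hU hΔ1 hΔ1U hgap hsum _ _ _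
        · exact hex
    _ = 0 := Finset.sum_const_zero

/- ---------- bridge geometry ---------- -/

def tS (p : Site) (k : ℕ) : Site := (p.1 + (k : ℤ), p.2 - (k : ℤ))
def cS (p : Site) (k : ℕ) : Site := (p.1 + (k : ℤ), p.2 - 1 - (k : ℤ))
def bS (p : Site) (k : ℕ) : Site := (p.1 - 1 + (k : ℤ), p.2 - 1 - (k : ℤ))

lemma mem_beamSites {p : Site} {l : ℕ} {x : Site} :
    x ∈ beamSites p l ↔ ∃ k, k ≤ l ∧ x = tS p k := by
  simp only [beamSites, Finset.mem_image, Finset.mem_range, Nat.lt_succ_iff, tS]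
  constructor
  · rintro ⟨k, hk, he⟩; exact ⟨k, hk, he.symm⟩
  · rintro ⟨k, hk, he⟩; exact ⟨k, hk, he.symm⟩

lemma mem_centerSites {p : Site} {l : ℕ} {x : Site} :
    x ∈ centerSites p l ↔ ∃ k, k < l ∧ x = cS p k := by
  simp only [centerSites, Finset.mem_image, Finset.mem_range, cS]
  constructor
  · rintro ⟨k, hk, he⟩; exact ⟨k, hk, he.symm⟩
  · rintro ⟨k, hk, he⟩; exact ⟨k, hk, he.symm⟩

lemma mem_basementSites {p : Site} {l : ℕ} {x : Site} :
    x ∈ basementSites p l ↔ ∃ k, k ≤ l ∧ x = bS p k := by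
  simp only [basementSites, Finset.mem_image, Finset.mem_range, Nat.lt_succ_iff, bS]
  constructor
  · rintro ⟨k, hk, he⟩; exact ⟨k, hk, he.symm⟩
  · rintro ⟨k, hk, he⟩; exact ⟨k, hk, he.symm⟩

lemma tS_mem {p : Site} {l k : ℕ} (h : k ≤ l) : tS p k ∈ beamSites p l :=
  mem_beamSites.2 ⟨k, h, rfl⟩
lemma cS_mem {p : Site} {l k : ℕ} (h : k < l) : cS p k ∈ centerSites p l :=
  mem_centerSites.2 ⟨k, h, rfl⟩
lemma bS_mem {p : Site} {l k : ℕ} (h : k ≤ l) : bS p k ∈ basementSites p l :=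
  mem_basementSites.2 ⟨k, h, rfl⟩

lemma coordsum_beam {p : Site} {l : ℕ} {x : Site} (h : x ∈ beamSites p l) :
    x.1 + x.2 = p.1 + p.2 := by
  obtain ⟨k, _, rfl⟩ := mem_beamSites.1 h; simp [tS]; try ring

lemma coordsum_center {p : Site} {l : ℕ} {x : Site} (h : x ∈ centerSites p l) :
    x.1 + x.2 = p.1 + p.2 - 1 := by
  obtain ⟨k, _, rfl⟩ := mem_centerSites.1 h; simp [cS]; try ring

lemma coordsum_basement {p : Site} {l : ℕ} {x : Site} (h : x ∈ basementSites p l) :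
    x.1 + x.2 = p.1 + p.2 - 2 := by
  obtain ⟨k, _, rfl⟩ := mem_basementSites.1 h; simp [bS]; try ring

lemma mem_bridge {p : Site} {l : ℕ} {x : Site} :
    x ∈ bridgeSupport p l
      ↔ x ∈ beamSites p l ∨ x ∈ centerSites p l ∨ x ∈ basementSites p l := by
  simp [bridgeSupport, Finset.mem_union, or_assoc]

lemma nbrs_cS (p : Site) (i : ℕ) :
    nbrs (cS p i) = {tS p (i + 1), bS p i, tS p i, bS p (i + 1)} := by
  rw [show nbrs (cS p i) = {((cS p i).1 + 1, (cS p i).2), ((cS p i).1 - 1, (cS p i).2),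
        ((cS p i).1, (cS p i).2 + 1), ((cS p i).1, (cS p i).2 - 1)} from rfl,
    show (((cS p i).1 + 1, (cS p i).2) : Site) = tS p (i + 1) from by
      simp [cS, tS, Prod.ext_iff]; try omega,
    show (((cS p i).1 - 1, (cS p i).2) : Site) = bS p i from by
      simp [cS, bS, Prod.ext_iff]; try omega,
    show (((cS p i).1, (cS p i).2 + 1) : Site) = tS p i from by
      simp [cS, tS, Prod.ext_iff]; try omega,
    show (((cS p i).1, (cS p i).2 - 1) : Site) = bS p (i + 1) from by
      simp [cS, bS, Prod.ext_iff]; try omega]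

lemma nbrs_bS (p : Site) (j : ℕ) (hj : 1 ≤ j) :
    nbrs (bS p j) = {cS p j, (p.1 - 2 + (j : ℤ), p.2 - 1 - (j : ℤ)), cS p (j - 1),
      (p.1 - 1 + (j : ℤ), p.2 - 2 - (j : ℤ))} := by
  rw [show nbrs (bS p j) = {((bS p j).1 + 1, (bS p j).2), ((bS p j).1 - 1, (bS p j).2),
        ((bS p j).1, (bS p j).2 + 1), ((bS p j).1, (bS p j).2 - 1)} from rfl,
    show (((bS p j).1 + 1, (bS p j).2) : Site) = cS p j from by
      simp [cS, bS, Prod.ext_iff]; try omega,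
    show (((bS p j).1 - 1, (bS p j).2) : Site) = (p.1 - 2 + (j : ℤ), p.2 - 1 - (j : ℤ)) from by
      simp [bS, Prod.ext_iff]; try omega,
    show (((bS p j).1, (bS p j).2 + 1) : Site) = cS p (j - 1) from by
      simp [cS, bS, Prod.ext_iff]; try omega,
    show (((bS p j).1, (bS p j).2 - 1) : Site) = (p.1 - 1 + (j : ℤ), p.2 - 2 - (j : ℤ)) from by
      simp [bS, Prod.ext_iff]; try omega]

lemma ite_le_ite_of_imp {P Q : Prop} [Decidable P] [Decidable Q] (h : P → Q) :
    (if P then (1 : ℝ) else 0) ≤ if Q then 1 else 0 := by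
  split_ifs with h1 h2
  · exact le_refl 1
  · exact absurd (h h1) h2
  · norm_num
  · exact le_refl 0

lemma fin_ne_12 : ((1 : Fin 3) = 2) = False := by decide
lemma fin_ne_21 : ((2 : Fin 3) = 1) = False := by decide

lemma ite_le_one' {P : Prop} [Decidable P] : (if P then (1 : ℝ) else 0) ≤ 1 := by
  split_ifs <;> norm_num

end AuxTB

/-- tb-tiling the support of a south-bridge whose support is not tb-tiled
strictly lowers the energy. -/
theorem tb_tiling_bridge_lowers_energy
    (U Δ1 Δ2 : ℝ) (hU : 0 < U) (hΔ1 : 0 < Δ1) (hΔ1U : Δ1 < U)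
    (hgap : 2 * U < Δ2 - Δ1) (hsum : Δ1 + Δ2 < 4 * U)
    (Λ : Finset Site) (η η' : Config Λ) (p : Site) (l : ℕ) (hl : 1 ≤ l)
    (hsupp : bridgeSupport p l ⊆ inner2 Λ)
    (hbeam : ∀ x ∈ beamSites p l, η.val x = 1)
    (hpillW : η.val (p.1 - 1, p.2 - 1) = 1)
    (hpillE : η.val (p.1 - 1 + (l : ℤ), p.2 - 1 - (l : ℤ)) = 1)
    (hnot : ¬ ((∀ x ∈ centerSites p l, η.val x = 2) ∧
        ∀ x ∈ basementSites p l, η.val x = 1))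
    (hη' : ∀ x, η'.val x =
        if x ∈ centerSites p l then 2
        else if x ∈ beamSites p l ∪ basementSites p l then 1
        else η.val x) :
    energy U Δ1 Δ2 η' < energy U Δ1 Δ2 η := by
  classical
  have hS1 : bridgeSupport p l ⊆ inner1 Λ := fun x hx => inner2_subset' Λ (hsupp hx)
  have hSΛ : bridgeSupport p l ⊆ Λ := fun x hx => inner1_subset' Λ (hS1 hx)
  have hbm : ∀ x ∈ bridgeSupport p l, nbrs x ⊆ inner1 Λ :=
    fun x hx => nbrs_subset_inner1 (hsupp hx)
  have htb : ∀ k, k ≤ l → tS p k ∈ bridgeSupport p l :=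
    fun k hk => mem_bridge.2 (Or.inl (tS_mem hk))
  have hcb : ∀ k, k < l → cS p k ∈ bridgeSupport p l :=
    fun k hk => mem_bridge.2 (Or.inr (Or.inl (cS_mem hk)))
  have hbb : ∀ k, k ≤ l → bS p k ∈ bridgeSupport p l :=
    fun k hk => mem_bridge.2 (Or.inr (Or.inr (bS_mem hk)))
  -- values of η'
  have hvt : ∀ k, k ≤ l → η'.val (tS p k) = 1 := by
    intro k hk
    have h1 : tS p k ∉ centerSites p l := by
      intro hmem; have := coordsum_center hmem; simp [tS] at this; omega
    rw [hη', if_neg h1, if_pos (Finset.mem_union_left _ (tS_mem hk))]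
  have hvc : ∀ k, k < l → η'.val (cS p k) = 2 := fun k hk => by
    rw [hη', if_pos (cS_mem hk)]
  have hvb : ∀ k, k ≤ l → η'.val (bS p k) = 1 := by
    intro k hk
    have h1 : bS p k ∉ centerSites p l := by
      intro hmem; have := coordsum_center hmem; simp [bS] at this; omega
    rw [hη', if_neg h1, if_pos (Finset.mem_union_right _ (bS_mem hk))]
  have hvout : ∀ x, x ∉ bridgeSupport p l → η'.val x = η.val x := by
    intro x hx
    rw [hη', if_neg (fun h => hx (mem_bridge.2 (Or.inr (Or.inl h)))),
      if_neg (fun h => hx (mem_bridge.2 (by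
        rcases Finset.mem_union.1 h with h' | h'
        exacts [Or.inl h', Or.inr (Or.inr h')])))]
  -- change classification
  have hchg2 : ∀ x, η'.val x ≠ η.val x → x ∈ centerSites p l ∨ x ∈ basementSites p l := by
    intro x hne
    by_cases h1 : x ∈ centerSites p l
    · exact Or.inl h1
    by_cases h2 : x ∈ beamSites p l ∪ basementSites p l
    · rcases Finset.mem_union.1 h2 with hb | hb
      · exact absurd (by rw [hη', if_neg h1, if_pos h2]; exact (hbeam x hb).symm) hne
      · exact Or.inr hb
    · exact absurd (by rw [hη', if_neg h1, if_neg h2]) hne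
  -- no neighbour of an off-support site is a center site
  have hnc : ∀ y, y ∉ bridgeSupport p l → ∀ x ∈ nbrs y, x ∉ centerSites p l := by
    intro y hy x hx hxc
    obtain ⟨i, hi, rfl⟩ := mem_centerSites.1 hxc
    have hyx : y ∈ nbrs (cS p i) := mem_nbrs'.2 (adj_symm' (mem_nbrs'.1 hx))
    rw [nbrs_cS] at hyx
    simp only [Finset.mem_insert, Finset.mem_singleton] at hyx
    apply hy
    rcases hyx with rfl | rfl | rfl | rfl
    · exact htb (i + 1) (by omega)
    · exact hbb i (by omega)
    · exact htb i (by omega)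
    · exact hbb (i + 1) (by omega)
  have hmono : ∀ y, y ∉ bridgeSupport p l → ∀ x ∈ nbrs y,
      η.val x = 1 → η'.val x = 1 := by
    intro y hy x hx h1
    by_cases hne : η'.val x = η.val x
    · rw [hne, h1]
    · rcases hchg2 x hne with hc | hb
      · exact absurd hc (hnc y hy x hx)
      · obtain ⟨j, hj, rfl⟩ := mem_basementSites.1 hb
        exact hvb j hj
  set F : Site → ℝ := fun y => hloc U Δ1 Δ2 Λ η'.val y - hloc U Δ1 Δ2 Λ η.val y with hF
  set E : Finset Site := bridgeSupport p l ∪ (basementSites p l).biUnion nbrs with hE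
  have hSE : bridgeSupport p l ⊆ E := Finset.subset_union_left
  -- localization
  have hzero : ∀ y ∈ Λ, y ∉ E → F y = 0 := by
    intro y _ hyE
    have hyS : y ∉ bridgeSupport p l := fun h => hyE (hSE h)
    have hvy : η'.val y = η.val y := hvout y hyS
    have hnbr : ∀ x ∈ nbrs y, η'.val x = η.val x := by
      intro x hx
      by_contra hne
      rcases hchg2 x hne with hc | hb
      · exact hnc y hyS x hx hc
      · exact hyE (Finset.mem_union_right _ (Finset.mem_biUnion.2
          ⟨x, hb, mem_nbrs'.2 (adj_symm' (mem_nbrs'.1 hx))⟩))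
    have hdeq : deg1 Λ η'.val y = deg1 Λ η.val y := by
      unfold deg1
      congr 1
      apply Finset.filter_congr
      intro x hx
      rw [hnbr x hx]
    have : hloc U Δ1 Δ2 Λ η'.val y = hloc U Δ1 Δ2 Λ η.val y := by
      unfold hloc
      rw [hvy, hdeq]
    simp only [hF, this, sub_self]
  have hstep1 : ∑ y ∈ Λ, F y = ∑ y ∈ Λ.filter (· ∈ E), F y := by
    rw [← Finset.sum_filter_add_sum_filter_not Λ (· ∈ E) F,
      Finset.sum_eq_zero (fun y hy => hzero y (Finset.mem_filter.1 hy).1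
        (Finset.mem_filter.1 hy).2), add_zero]
  have hSsubF : bridgeSupport p l ⊆ Λ.filter (· ∈ E) :=
    fun x hx => Finset.mem_filter.2 ⟨hSΛ hx, hSE hx⟩
  have hstep2 : ∑ y ∈ Λ.filter (· ∈ E), F y
      = ∑ y ∈ Λ.filter (· ∈ E) \ bridgeSupport p l, F y + ∑ y ∈ bridgeSupport p l, F y :=
    (Finset.sum_sdiff hSsubF).symm
  -- off-support terms are nonpositive
  have houtside : ∀ y, y ∉ bridgeSupport p l → F y ≤ 0 := by
    intro y hyS
    have hvy := hvout y hyS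
    have hsub : (nbrs y).filter (fun x => x ∈ inner1 Λ ∧ η.val x = 1)
        ⊆ (nbrs y).filter (fun x => x ∈ inner1 Λ ∧ η'.val x = 1) := by
      intro x hx
      have h := Finset.mem_filter.1 hx
      exact Finset.mem_filter.2 ⟨h.1, h.2.1, hmono y hyS x h.1 h.2.2⟩
    have hdle : (if y ∈ inner1 Λ ∧ η.val y = 2 then (deg1 Λ η.val y : ℝ) else 0)
        ≤ (if y ∈ inner1 Λ ∧ η.val y = 2 then (deg1 Λ η'.val y : ℝ) else 0) := by
      split_ifs with h
      · exact_mod_cast Finset.card_le_card hsub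
      · exact le_refl 0
    have hmul := mul_le_mul_of_nonneg_left hdle (le_of_lt hU)
    simp only [hF]
    unfold hloc
    rw [hvy]
    linarith
  have hWn : ∑ y ∈ Λ.filter (· ∈ E) \ bridgeSupport p l, F y ≤ 0 :=
    Finset.sum_nonpos fun y hy => houtside y (Finset.mem_sdiff.1 hy).2
  -- support splitting
  have hdisj1 : Disjoint (beamSites p l) (centerSites p l) := by
    rw [Finset.disjoint_left]
    intro x h1 h2
    have hA := coordsum_beam h1; have hB := coordsum_center h2; omega
  have hdisj2 : Disjoint (beamSites p l ∪ centerSites p l) (basementSites p l) := by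
    rw [Finset.disjoint_left]
    intro x h1 h2
    have hB := coordsum_basement h2
    rcases Finset.mem_union.1 h1 with h | h
    · have := coordsum_beam h; omega
    · have := coordsum_center h; omega
  have hstep3 : ∑ y ∈ bridgeSupport p l, F y
      = ∑ y ∈ beamSites p l, F y + ∑ y ∈ centerSites p l, F y
        + ∑ y ∈ basementSites p l, F y := by
    rw [show bridgeSupport p l = (beamSites p l ∪ centerSites p l) ∪ basementSites p l
        from rfl, Finset.sum_union hdisj2, Finset.sum_union hdisj1]
  -- beam terms vanish
  have hbeamzero : ∑ y ∈ beamSites p l, F y = 0 := by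
    apply Finset.sum_eq_zero
    intro y hy
    obtain ⟨k, hk, rfl⟩ := mem_beamSites.1 hy
    have h1 : η.val (tS p k) = 1 := hbeam _ (tS_mem hk)
    have h2 := hvt k hk
    simp only [hF]
    unfold hloc
    rw [h1, h2]
    simp [fin_ne_12]
  -- center terms
  have hcentersum : ∑ y ∈ centerSites p l, F y = ∑ i ∈ Finset.range l, F (cS p i) := by
    rw [show centerSites p l = (Finset.range l).image (cS p) from rfl]
    apply Finset.sum_image
    intro i _ j _ hij
    simp only [cS, Prod.ext_iff] at hij
    omega
  have hAterm : ∀ i, i < l → F (cS p i)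
      = Aval U Δ1 Δ2 (η.val (cS p i)) (η.val (bS p i)) (η.val (bS p (i + 1))) := by
    intro i hi
    have d12 : tS p (i + 1) ≠ bS p i := by simp [tS, bS, Prod.ext_iff]; try omega
    have d13 : tS p (i + 1) ≠ tS p i := by simp [tS, Prod.ext_iff]; try omega
    have d14 : tS p (i + 1) ≠ bS p (i + 1) := by simp [tS, bS, Prod.ext_iff]; try omega
    have d23 : bS p i ≠ tS p i := by simp [tS, bS, Prod.ext_iff]; try omega
    have d24 : bS p i ≠ bS p (i + 1) := by simp [bS, Prod.ext_iff]; try omega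
    have d34 : tS p i ≠ bS p (i + 1) := by simp [tS, bS, Prod.ext_iff]; try omega
    have hmem1 : cS p i ∈ inner1 Λ := hS1 (hcb i hi)
    have hb1 : bS p i ∈ inner1 Λ := hS1 (hbb i (by omega))
    have hb2 : bS p (i + 1) ∈ inner1 Λ := hS1 (hbb (i + 1) (by omega))
    have hdeg' : deg1 Λ η'.val (cS p i) = 4 := by
      unfold deg1
      rw [nbrs_cS, Finset.filter_true_of_mem, quad_card d12 d13 d14 d23 d24 d34]
      intro x hx
      simp only [Finset.mem_insert, Finset.mem_singleton] at hx
      rcases hx with rfl | rfl | rfl | rfl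
      · exact ⟨hS1 (htb _ (by omega)), hvt _ (by omega)⟩
      · exact ⟨hb1, hvb _ (by omega)⟩
      · exact ⟨hS1 (htb _ (by omega)), hvt _ (by omega)⟩
      · exact ⟨hb2, hvb _ (by omega)⟩
    have h2' : hloc U Δ1 Δ2 Λ η'.val (cS p i) = Δ2 - U * 4 := by
      unfold hloc
      rw [hvc i hi, hdeg',
        if_pos (show cS p i ∈ inner1 Λ ∧ (2 : Fin 3) = 2 from ⟨hmem1, rfl⟩)]
      simp [fin_ne_21]
    have hdeg : (deg1 Λ η.val (cS p i) : ℝ)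
        = 1 + (if η.val (bS p i) = 1 then 1 else 0) + 1
          + (if η.val (bS p (i + 1)) = 1 then 1 else 0) := by
      unfold deg1
      rw [Finset.card_filter, nbrs_cS, quad_sum _ d12 d13 d14 d23 d24 d34,
        if_pos (show tS p (i + 1) ∈ inner1 Λ ∧ η.val (tS p (i + 1)) = 1 from
          ⟨hS1 (htb (i + 1) (by omega)), hbeam _ (tS_mem (by omega))⟩),
        if_pos (show tS p i ∈ inner1 Λ ∧ η.val (tS p i) = 1 from
          ⟨hS1 (htb i (by omega)), hbeam _ (tS_mem (by omega : i ≤ l))⟩)]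
      simp only [hb1, hb2, true_and]
      push_cast [apply_ite (Nat.cast : ℕ → ℝ)]
      ring
    have h1' : hloc U Δ1 Δ2 Λ η.val (cS p i)
        = (if η.val (cS p i) = 1 then Δ1 else 0) + (if η.val (cS p i) = 2 then Δ2 else 0)
          - U * (if η.val (cS p i) = 2 then ((1 : ℝ)
              + (if η.val (bS p i) = 1 then 1 else 0) + 1
              + (if η.val (bS p (i + 1)) = 1 then 1 else 0)) else 0) := by
      unfold hloc
      have hmm : (cS p i ∈ inner1 Λ ∧ η.val (cS p i) = 2) = (η.val (cS p i) = 2) := by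
        simp [hmem1]
      rw [hdeg]
      simp only [hmm]
    simp only [hF]
    rw [h2', h1', Aval]
  -- basement terms
  have hbasesum : ∑ y ∈ basementSites p l, F y
      = ∑ j ∈ Finset.range (l + 1), F (bS p j) := by
    rw [show basementSites p l = (Finset.range (l + 1)).image (bS p) from rfl]
    apply Finset.sum_image
    intro i _ j _ hij
    simp only [bS, Prod.ext_iff] at hij
    omega
  have hd0 : η.val (bS p 0) = 1 := by
    have he : bS p 0 = ((p.1 - 1, p.2 - 1) : Site) := by simp [bS]
    rw [he]; exact hpillW
  have hdl : η.val (bS p l) = 1 := hpillE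
  have hb0 : F (bS p 0) = 0 := by
    simp only [hF]
    unfold hloc
    rw [hd0, hvb 0 (by omega)]
    simp [fin_ne_12]
  have hbl : F (bS p l) = 0 := by
    simp only [hF]
    unfold hloc
    rw [hdl, hvb l le_rfl]
    simp [fin_ne_12]
  have hCterm : ∀ j, 1 ≤ j → j < l → F (bS p j)
      ≤ Cval U Δ1 Δ2 (η.val (cS p (j - 1))) (η.val (cS p j)) (η.val (bS p j)) := by
    intro j h1j hjl
    have e12 : cS p j ≠ (p.1 - 2 + (j : ℤ), p.2 - 1 - (j : ℤ)) := by
      simp [cS, Prod.ext_iff]; try omega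
    have e13 : cS p j ≠ cS p (j - 1) := by simp [cS, Prod.ext_iff]; try omega
    have e14 : cS p j ≠ (p.1 - 1 + (j : ℤ), p.2 - 2 - (j : ℤ)) := by
      simp [cS, Prod.ext_iff]; try omega
    have e23 : ((p.1 - 2 + (j : ℤ), p.2 - 1 - (j : ℤ)) : Site) ≠ cS p (j - 1) := by
      simp [cS, Prod.ext_iff]; try omega
    have e24 : ((p.1 - 2 + (j : ℤ), p.2 - 1 - (j : ℤ)) : Site)
        ≠ (p.1 - 1 + (j : ℤ), p.2 - 2 - (j : ℤ)) := by
      simp [Prod.ext_iff]; try omega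
    have e34 : cS p (j - 1) ≠ (p.1 - 1 + (j : ℤ), p.2 - 2 - (j : ℤ)) := by
      simp [cS, Prod.ext_iff]; try omega
    have hmemb : bS p j ∈ inner1 Λ := hS1 (hbb j (by omega))
    have h2' : hloc U Δ1 Δ2 Λ η'.val (bS p j) = Δ1 := by
      unfold hloc
      rw [hvb j (by omega)]
      simp [fin_ne_12]
    have hdegle : (deg1 Λ η.val (bS p j) : ℝ)
        ≤ (if η.val (cS p j) = 1 then (1 : ℝ) else 0) + 1
          + (if η.val (cS p (j - 1)) = 1 then 1 else 0) + 1 := by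
      unfold deg1
      rw [Finset.card_filter, nbrs_bS p j h1j, quad_sum _ e12 e13 e14 e23 e24 e34]
      push_cast [apply_ite (Nat.cast : ℕ → ℝ)]
      have b1 := ite_le_ite_of_imp (P := cS p j ∈ inner1 Λ ∧ η.val (cS p j) = 1)
        (Q := η.val (cS p j) = 1) (fun h => h.2)
      have b3 := ite_le_ite_of_imp
        (P := cS p (j - 1) ∈ inner1 Λ ∧ η.val (cS p (j - 1)) = 1)
        (Q := η.val (cS p (j - 1)) = 1) (fun h => h.2)
      have b2 := ite_le_one' (P := ((p.1 - 2 + (j : ℤ), p.2 - 1 - (j : ℤ)) : Site)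
        ∈ inner1 Λ ∧ η.val (p.1 - 2 + (j : ℤ), p.2 - 1 - (j : ℤ)) = 1)
      have b4 := ite_le_one' (P := ((p.1 - 1 + (j : ℤ), p.2 - 2 - (j : ℤ)) : Site)
        ∈ inner1 Λ ∧ η.val (p.1 - 1 + (j : ℤ), p.2 - 2 - (j : ℤ)) = 1)
      linarith
    have hmul : U * (if η.val (bS p j) = 2 then (deg1 Λ η.val (bS p j) : ℝ) else 0)
        ≤ U * (if η.val (bS p j) = 2 then ((if η.val (cS p j) = 1 then (1 : ℝ) else 0) + 1
            + (if η.val (cS p (j - 1)) = 1 then 1 else 0) + 1) else 0) := by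
      apply mul_le_mul_of_nonneg_left _ (le_of_lt hU)
      by_cases h : η.val (bS p j) = 2
      · rw [if_pos h, if_pos h]; exact hdegle
      · rw [if_neg h, if_neg h]
    simp only [hF]
    rw [h2']
    unfold hloc
    have hmm : (bS p j ∈ inner1 Λ ∧ η.val (bS p j) = 2) = (η.val (bS p j) = 2) := by
      simp [hmemb]
    unfold Cval
    simp only [hmm]
    linarith
  have hbase_le : ∑ j ∈ Finset.range (l + 1), F (bS p j)
      ≤ ∑ j ∈ Finset.Ico 1 l, Cval U Δ1 Δ2 (η.val (cS p (j - 1))) (η.val (cS p j))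
          (η.val (bS p j)) := by
    rw [Finset.sum_range_succ, Finset.range_eq_Ico, Finset.sum_eq_sum_Ico_succ_bot hl,
      hb0, hbl, zero_add, add_zero]
    exact Finset.sum_le_sum (fun j hj =>
      hCterm j (Finset.mem_Ico.1 hj).1 (Finset.mem_Ico.1 hj).2)
  -- assemble
  have hnot2 : ¬ ((∀ i, i < l → η.val (cS p i) = 2) ∧ (∀ j, j ≤ l → η.val (bS p j) = 1)) := by
    rintro ⟨h1, h2⟩
    apply hnot
    constructor
    · intro x hx; obtain ⟨i, hi, rfl⟩ := mem_centerSites.1 hx; exact h1 i hi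
    · intro x hx; obtain ⟨j, hj, rfl⟩ := mem_basementSites.1 hx; exact h2 j hj
  have hkey := key_sum U Δ1 Δ2 hU hΔ1 hΔ1U hgap hsum l hl
    (fun i => η.val (cS p i)) (fun j => η.val (bS p j)) hd0 hdl hnot2
  have htotal : energy U Δ1 Δ2 η' - energy U Δ1 Δ2 η
      ≤ (∑ i ∈ Finset.range l, Aval U Δ1 Δ2 (η.val (cS p i)) (η.val (bS p i))
          (η.val (bS p (i + 1))))
        + ∑ j ∈ Finset.Ico 1 l, Cval U Δ1 Δ2 (η.val (cS p (j - 1))) (η.val (cS p j))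
            (η.val (bS p j)) := by
    rw [energy_eq_sum, energy_eq_sum, ← Finset.sum_sub_distrib]
    have hid : ∑ y ∈ Λ, (hloc U Δ1 Δ2 Λ η'.val y - hloc U Δ1 Δ2 Λ η.val y)
        = ∑ y ∈ Λ, F y := rfl
    rw [hid, hstep1, hstep2, hstep3, hbeamzero, hcentersum, hbasesum, zero_add,
      Finset.sum_congr rfl (fun i hi => hAterm i (Finset.mem_range.1 hi))]
    linarith
  linarith
end
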